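/- For every integer $d \geq 2$ there exists a constant $C > 0$ such that for all real $x \geq e^{2\omega(d)}$, $\displaystyle\sum_{\substack{w \mid d^\infty \\ w > x}} \frac{1}{w} \leq C \cdot \frac{(\log x)^{\omega(d)}}{x}$, where the sum is over positive integers $w > x$ all of whose prime factors divide $d$. -/

import Mathlib

open Real Finset

theorem stmt_16 (d : ℕ) (hd : 2 ≤ d) :
    ∃ C : ℝ, 0 < C ∧ ∀ x : ℝ, Real.exp (2 * d.primeFactors.card) ≤ x →
      (∑' w : {w : ℕ // (∀ l : ℕ, l.Prime → l ∣ w → l ∣ d) ∧ x < (w : ℝ)},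
          (1 : ℝ) / (w : ℕ))
        ≤ C * Real.log x ^ d.primeFactors.card / x := by
  set k := d.primeFactors.card with hk
  have hd0 : d ≠ 0 := by omega
  have hk1 : 1 ≤ k := by
    have : d.primeFactors.Nonempty := Nat.nonempty_primeFactors.mpr hd
    simpa [hk, Finset.card_pos] using this
  have hlog2 : (0:ℝ) < Real.log 2 := Real.log_pos (by norm_num)
  refine ⟨Real.exp 1 * ((d : ℝ) / Real.log 2) ^ k, by positivity, ?_⟩
  intro x hx
  -- basic facts about x
  have hxpos : (0:ℝ) < x := lt_of_lt_of_le (Real.exp_pos _) hx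
  have hlogx : (2:ℝ) ≤ Real.log x := by
    have h1 : (2:ℝ) ≤ 2 * k := by
      have : (1:ℝ) ≤ k := by exact_mod_cast hk1
      nlinarith
    calc (2:ℝ) ≤ 2 * k := h1
      _ = Real.log (Real.exp (2 * k)) := by rw [Real.log_exp]
      _ ≤ Real.log x := Real.log_le_log (Real.exp_pos _) hx
  have hlogxpos : (0:ℝ) < Real.log x := by linarith
  have hx1 : (1:ℝ) < x := by
    calc (1:ℝ) = Real.exp 0 := (Real.exp_zero).symm
      _ < Real.exp (2 * k) := Real.exp_lt_exp.mpr (by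
          have : (1:ℝ) ≤ k := by exact_mod_cast hk1
          nlinarith)
      _ ≤ x := hx
  set ε : ℝ := (Real.log x)⁻¹ with hε
  have hεpos : 0 < ε := inv_pos.mpr hlogxpos
  have hεle : ε ≤ 1 := by
    rw [hε]
    rw [inv_le_one_iff₀]; right; linarith
  -- the completely multiplicative function n ↦ n ^ (-ε)
  set F : ℕ →* ℝ :=
    { toFun := fun n => (n : ℝ) ^ (-ε)
      map_one' := by simp
      map_mul' := fun m n => by
        push_cast
        exact Real.mul_rpow (Nat.cast_nonneg m) (Nat.cast_nonneg n) } with hF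
  have hFnonneg : ∀ n : ℕ, 0 ≤ F n := fun n =>
    Real.rpow_nonneg (Nat.cast_nonneg n) _
  have hFlt : ∀ {p : ℕ}, p.Prime → ‖F p‖ < 1 := by
    intro p hp
    have h1p : (1:ℝ) < p := by exact_mod_cast hp.one_lt
    rw [Real.norm_eq_abs, abs_of_nonneg (hFnonneg p)]
    exact Real.rpow_lt_one_of_one_lt_of_neg h1p (neg_neg_iff_pos.mpr hεpos)
  obtain ⟨hsum, hprod⟩ :=
    EulerProduct.summable_and_hasSum_factoredNumbers_prod_filter_prime_geometric
      (f := F) hFlt d.primeFactors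
  have hG : Summable (fun m : Nat.factoredNumbers d.primeFactors => F m) := by
    refine hsum.of_norm_bounded (fun m => ?_)
    rw [Real.norm_eq_abs, abs_of_nonneg (hFnonneg m)]
  -- the injection from our index type into factored numbers
  set A := {w : ℕ // (∀ l : ℕ, l.Prime → l ∣ w → l ∣ d) ∧ x < (w : ℝ)} with hA
  have hwpos : ∀ w : A, 0 < (w.1 : ℝ) := fun w => lt_trans hxpos w.2.2
  have hmem : ∀ w : A, (w.1 : ℕ) ∈ Nat.factoredNumbers d.primeFactors := by
    intro ⟨w, h1, h2⟩
    rw [Nat.mem_factoredNumbers]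
    constructor
    · rintro rfl
      simp at h2
      linarith
    · intro p hp
      have hpp := Nat.prime_of_mem_primeFactorsList hp
      have hpd := Nat.dvd_of_mem_primeFactorsList hp
      exact Nat.mem_primeFactors.mpr ⟨hpp, h1 p hpp hpd, hd0⟩
  set i : A → Nat.factoredNumbers d.primeFactors := fun w => ⟨w.1, hmem w⟩ with hi
  have hinj : Function.Injective i := by
    intro a b h
    have h2 : (i a).1 = (i b).1 := congrArg Subtype.val h
    exact Subtype.ext h2
  have hGcomp : Summable ((fun m : Nat.factoredNumbers d.primeFactors => F m) ∘ i) :=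
    hG.comp_injective hinj
  -- termwise bound
  have hterm : ∀ w : A, (1:ℝ) / (w.1 : ℕ) ≤ x ^ (ε - 1) * F w.1 := by
    intro w
    have hw := hwpos w
    have hxw : x ≤ (w.1 : ℝ) := le_of_lt w.2.2
    have e1 : (1:ℝ) / (w.1 : ℕ) = (w.1 : ℝ) ^ (ε - 1) * (w.1 : ℝ) ^ (-ε) := by
      rw [← Real.rpow_add hw, show ε - 1 + -ε = -1 by ring, Real.rpow_neg_one, one_div]
    rw [e1]
    have e2 : (w.1 : ℝ) ^ (ε - 1) ≤ x ^ (ε - 1) :=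
      Real.rpow_le_rpow_of_nonpos hxpos hxw (by linarith)
    exact mul_le_mul_of_nonneg_right e2 (Real.rpow_nonneg (le_of_lt hw) _)
  have hRHSsum : Summable (fun w : A => x ^ (ε - 1) * F w.1) := by
    exact hGcomp.mul_left _
  have hLHSsum : Summable (fun w : A => (1:ℝ) / (w.1 : ℕ)) := by
    refine Summable.of_nonneg_of_le (fun w => by positivity) hterm hRHSsum
  -- x ^ (ε - 1) = e / x
  have hxe : x ^ (ε - 1) = Real.exp 1 * x⁻¹ := by
    rw [Real.rpow_sub hxpos, Real.rpow_one]
    congr 1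
    rw [Real.rpow_def_of_pos hxpos, hε, mul_inv_cancel₀ (ne_of_gt hlogxpos)]
  -- bound on each Euler factor
  have hfac : ∀ p ∈ d.primeFactors,
      (1 - F p)⁻¹ ≤ (d : ℝ) / Real.log 2 * Real.log x := by
    intro p hp
    have hpp := Nat.prime_of_mem_primeFactors hp
    have hpd := Nat.dvd_of_mem_primeFactors hp
    have h2p : (2:ℝ) ≤ p := by exact_mod_cast hpp.two_le
    have hpdr : (p:ℝ) ≤ d := by exact_mod_cast Nat.le_of_dvd (by omega) hpd
    have hlogp : Real.log 2 ≤ Real.log p := Real.log_le_log (by norm_num) h2p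
    have hlogppos : 0 < Real.log p := lt_of_lt_of_le hlog2 hlogp
    set t := ε * Real.log p with ht
    have htpos : 0 < t := mul_pos hεpos hlogppos
    have hFp : F p = Real.exp (-t) := by
      show ((p:ℝ)) ^ (-ε) = _
      rw [Real.rpow_def_of_pos (by linarith), ht]
      ring_nf
    rw [hFp]
    have key : t * Real.exp (-t) ≤ 1 - Real.exp (-t) := by
      have h1 := Real.add_one_le_exp t
      have h2 : (t + 1) * Real.exp (-t) ≤ Real.exp t * Real.exp (-t) :=
        mul_le_mul_of_nonneg_right h1 (le_of_lt (Real.exp_pos _))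
      rw [← Real.exp_add, add_neg_cancel, Real.exp_zero] at h2
      nlinarith [Real.exp_pos (-t)]
    have hpos : 0 < t * Real.exp (-t) := mul_pos htpos (Real.exp_pos _)
    have h3 : (1 - Real.exp (-t))⁻¹ ≤ (t * Real.exp (-t))⁻¹ :=
      inv_anti₀ hpos key
    refine h3.trans ?_
    rw [mul_inv, Real.exp_neg, inv_inv]
    have hexpt : Real.exp t ≤ (d : ℝ) := by
      have h4 : t ≤ Real.log p := by
        rw [ht]
        nlinarith
      calc Real.exp t ≤ Real.exp (Real.log p) := Real.exp_le_exp.mpr h4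
        _ = p := Real.exp_log (by linarith)
        _ ≤ d := hpdr
    have htinv : t⁻¹ ≤ Real.log x / Real.log 2 := by
      rw [ht, mul_inv, hε, inv_inv]
      rw [div_eq_mul_inv]
      exact mul_le_mul_of_nonneg_left (by
        exact inv_anti₀ hlog2 hlogp) (le_of_lt hlogxpos)
    calc t⁻¹ * Real.exp t ≤ (Real.log x / Real.log 2) * (d:ℝ) := by
          apply mul_le_mul htinv hexpt (le_of_lt (Real.exp_pos _))
          positivity
      _ = (d : ℝ) / Real.log 2 * Real.log x := by ring
  -- assemble
  have hfilter : d.primeFactors.filter Nat.Prime = d.primeFactors :=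
    Finset.filter_true_of_mem fun p hp => Nat.prime_of_mem_primeFactors hp
  have hfacpos : ∀ p ∈ d.primeFactors, (0:ℝ) ≤ (1 - F p)⁻¹ := by
    intro p hp
    have hpp := Nat.prime_of_mem_primeFactors hp
    have := hFlt hpp
    rw [Real.norm_eq_abs, abs_of_nonneg (hFnonneg p)] at this
    have : (0:ℝ) < 1 - F p := by linarith
    positivity
  have hprodbd : (∏ p ∈ d.primeFactors with p.Prime, (1 - F p)⁻¹)
      ≤ ((d : ℝ) / Real.log 2 * Real.log x) ^ k := by
    rw [hfilter]
    calc (∏ p ∈ d.primeFactors, (1 - F p)⁻¹)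
        ≤ ∏ _p ∈ d.primeFactors, ((d : ℝ) / Real.log 2 * Real.log x) :=
          Finset.prod_le_prod hfacpos hfac
      _ = ((d : ℝ) / Real.log 2 * Real.log x) ^ k := by
          rw [Finset.prod_const, hk]
  calc (∑' w : A, (1:ℝ) / (w.1 : ℕ))
      ≤ ∑' w : A, x ^ (ε - 1) * F w.1 := Summable.tsum_le_tsum hterm hLHSsum hRHSsum
    _ = x ^ (ε - 1) * ∑' w : A, F w.1 := tsum_mul_left
    _ ≤ x ^ (ε - 1) * ∑' m : Nat.factoredNumbers d.primeFactors, F m := by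
        apply mul_le_mul_of_nonneg_left _ (Real.rpow_nonneg (le_of_lt hxpos) _)
        exact tsum_comp_le_tsum_of_inj hG (fun m => hFnonneg m) hinj
    _ = x ^ (ε - 1) * ∏ p ∈ d.primeFactors with p.Prime, (1 - F p)⁻¹ := by
        rw [hprod.tsum_eq]
    _ ≤ (Real.exp 1 * x⁻¹) * (((d : ℝ) / Real.log 2 * Real.log x) ^ k) := by
        rw [hxe]
        apply mul_le_mul_of_nonneg_left hprodbd
        positivity
    _ = Real.exp 1 * ((d : ℝ) / Real.log 2) ^ k * Real.log x ^ k / x := by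
        rw [mul_pow]
        field_simp
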